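/- Let ω and μ be radial weights with ω ∈ D and μ ∈ D̂, and let 0 < p < ∞. Then the radial weight ν(r) := ω(r) μ̂(r)^p belongs to D. -/

import Mathlib

open MeasureTheory Set Filter
open scoped ENNReal

/-- The tail integral `ω̂(r) = ∫_r^1 ω(s) ds` of a radial weight. -/
noncomputable def wHat (ω : ℝ → ℝ) (r : ℝ) : ℝ := ∫ s in r..1, ω s

/-- The moment `ω_x = ∫_0^1 s^x ω(s) ds` of a radial weight. -/
noncomputable def wMom (ω : ℝ → ℝ) (x : ℝ) : ℝ := ∫ s in (0:ℝ)..1, s ^ x * ω s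

/-- A radial weight: nonnegative, integrable on `[0,1)`, with positive tail integrals. -/
def IsRadialWeight (ω : ℝ → ℝ) : Prop :=
  (∀ s ∈ Set.Ico (0:ℝ) 1, 0 ≤ ω s) ∧
    MeasureTheory.IntegrableOn ω (Set.Ico (0:ℝ) 1) ∧
    ∀ r ∈ Set.Ico (0:ℝ) 1, 0 < wHat ω r

/-- The class `D̂` of radial weights. -/
def Dhat (ω : ℝ → ℝ) : Prop :=
  ∃ C > (1:ℝ), ∀ r ∈ Set.Ico (0:ℝ) 1, wHat ω r ≤ C * wHat ω ((1 + r) / 2)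

/-- The class `Ď` of radial weights. -/
def Dcheck (ω : ℝ → ℝ) : Prop :=
  ∃ k > (1:ℝ), ∃ C > (1:ℝ), ∀ r ∈ Set.Ico (0:ℝ) 1,
    wHat ω r ≥ C * wHat ω (1 - (1 - r) / k)

/-- The class `D = D̂ ∩ Ď`. -/
def Dclass (ω : ℝ → ℝ) : Prop := Dhat ω ∧ Dcheck ω

/-- The class `M`: `ω_x ≥ C ω_{kx}` for all `x ≥ 1`. -/
def Mclass (ω : ℝ → ℝ) : Prop :=
  ∃ C > (1:ℝ), ∃ k > (1:ℝ), ∀ x : ℝ, 1 ≤ x → wMom ω x ≥ C * wMom ω (k * x)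

/-- The fractional derivative `D^μ f(z) = Σ (f̂(n)/μ_{2n+1}) zⁿ` induced by a radial
weight `μ`, acting on the Taylor coefficients `a` of `f`. -/
noncomputable def Dfrac (μ : ℝ → ℝ) (a : ℕ → ℂ) (z : ℂ) : ℂ :=
  ∑' n : ℕ, (a n / ((wMom μ (2 * (n : ℝ) + 1) : ℝ) : ℂ)) * z ^ n

/-- `∫_𝔻 |f(z)|^p w(|z|) dA(z)` as a Lebesgue integral (up to the normalization `1/π`). -/
noncomputable def discLInt (p : ℝ) (w : ℝ → ℝ) (f : ℂ → ℂ) : ℝ≥0∞ :=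
  ∫⁻ z in Metric.ball (0:ℂ) 1, ENNReal.ofReal (‖f z‖ ^ p * w ‖z‖)

/- ### Auxiliary lemmas -/

section Aux

variable {w : ℝ → ℝ}

lemma wHat_one (w : ℝ → ℝ) : wHat w 1 = 0 := by
  simp [wHat]

lemma intervalIntegrable_of_mem (hw : IntegrableOn w (Ico 0 1)) {a b : ℝ}
    (ha0 : 0 ≤ a) (ha1 : a ≤ 1) (hb0 : 0 ≤ b) (hb1 : b ≤ 1) :
    IntervalIntegrable w volume a b := by
  have h1 : IntegrableOn w (Icc 0 1) := hw.congr_set_ae Ico_ae_eq_Icc.symm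
  exact (h1.mono_set (uIcc_subset_Icc ⟨ha0, ha1⟩ ⟨hb0, hb1⟩)).intervalIntegrable

lemma integral_mono_Ioo {f g : ℝ → ℝ} {a b : ℝ} (hab : a ≤ b)
    (hf : IntervalIntegrable f volume a b) (hg : IntervalIntegrable g volume a b)
    (h : ∀ x ∈ Ioo a b, f x ≤ g x) : ∫ x in a..b, f x ≤ ∫ x in a..b, g x := by
  rw [intervalIntegral.integral_of_le hab, intervalIntegral.integral_of_le hab]
  have e1 : ∫ x in Ioc a b, f x = ∫ x in Ioo a b, f x :=
    (setIntegral_congr_set Ioo_ae_eq_Ioc).symm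
  have e2 : ∫ x in Ioc a b, g x = ∫ x in Ioo a b, g x :=
    (setIntegral_congr_set Ioo_ae_eq_Ioc).symm
  rw [e1, e2]
  exact setIntegral_mono_on (hf.1.mono_set Ioo_subset_Ioc_self)
    (hg.1.mono_set Ioo_subset_Ioc_self) measurableSet_Ioo h

lemma wHat_split (hw : IntegrableOn w (Ico 0 1)) {a b : ℝ}
    (ha0 : 0 ≤ a) (hab : a ≤ b) (hb1 : b ≤ 1) :
    wHat w a = (∫ s in a..b, w s) + wHat w b := by
  unfold wHat
  exact (intervalIntegral.integral_add_adjacent_intervals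
    (intervalIntegrable_of_mem hw ha0 (hab.trans hb1) (ha0.trans hab) hb1)
    (intervalIntegrable_of_mem hw (ha0.trans hab) hb1 zero_le_one le_rfl)).symm

lemma integral_nonneg_w (hw0 : ∀ s ∈ Ico (0:ℝ) 1, 0 ≤ w s)
    (hw : IntegrableOn w (Ico 0 1)) {a b : ℝ}
    (ha0 : 0 ≤ a) (hab : a ≤ b) (hb1 : b ≤ 1) : 0 ≤ ∫ s in a..b, w s := by
  have := integral_mono_Ioo (f := fun _ => (0:ℝ)) hab intervalIntegrable_const
    (intervalIntegrable_of_mem hw ha0 (hab.trans hb1) (ha0.trans hab) hb1)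
    (fun x hx => hw0 x ⟨ha0.trans hx.1.le, hx.2.trans_le hb1⟩)
  simpa using this

lemma wHat_anti (hw0 : ∀ s ∈ Ico (0:ℝ) 1, 0 ≤ w s)
    (hw : IntegrableOn w (Ico 0 1)) {a b : ℝ}
    (ha0 : 0 ≤ a) (hab : a ≤ b) (hb1 : b ≤ 1) : wHat w b ≤ wHat w a := by
  rw [wHat_split hw ha0 hab hb1]
  linarith [integral_nonneg_w hw0 hw ha0 hab hb1]

lemma wHat_nonneg (hw0 : ∀ s ∈ Ico (0:ℝ) 1, 0 ≤ w s)
    (hw : IntegrableOn w (Ico 0 1)) {a : ℝ}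
    (ha0 : 0 ≤ a) (ha1 : a ≤ 1) : 0 ≤ wHat w a := by
  have := wHat_anti hw0 hw ha0 ha1 le_rfl
  rw [wHat_one] at this
  exact this

lemma dhat_iter {C : ℝ} (hC : 0 < C)
    (h : ∀ r ∈ Ico (0:ℝ) 1, wHat w r ≤ C * wHat w ((1 + r) / 2)) (n : ℕ) :
    ∀ r ∈ Ico (0:ℝ) 1, wHat w r ≤ C ^ n * wHat w (1 - (1 - r) / 2 ^ n) := by
  induction n with
  | zero =>
    intro r hr
    have e : (1:ℝ) - (1 - r) / 2 ^ 0 = r := by norm_num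
    rw [e]; simp
  | succ n ih =>
    intro r hr
    have h2n : (1:ℝ) ≤ 2 ^ n := one_le_pow₀ (by norm_num : (1:ℝ) ≤ 2)
    have h2pos : (0:ℝ) < 2 ^ n := by positivity
    have hq : (1:ℝ) - (1 - r) / 2 ^ n ∈ Ico (0:ℝ) 1 := by
      constructor
      · have : (1 - r) / 2 ^ n ≤ 1 :=
          (div_le_one h2pos).2 (by linarith [hr.1])
        linarith
      · have : 0 < (1 - r) / 2 ^ n := div_pos (by linarith [hr.2]) h2pos
        linarith
    have h1 := ih r hr
    have h2 := h _ hq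
    have e : (1 + (1 - (1 - r) / 2 ^ n)) / 2 = 1 - (1 - r) / 2 ^ (n + 1) := by
      field_simp
      ring
    rw [e] at h2
    calc wHat w r ≤ C ^ n * wHat w (1 - (1 - r) / 2 ^ n) := h1
      _ ≤ C ^ n * (C * wHat w (1 - (1 - r) / 2 ^ (n + 1))) :=
          mul_le_mul_of_nonneg_left h2 (by positivity)
      _ = C ^ (n + 1) * wHat w (1 - (1 - r) / 2 ^ (n + 1)) := by ring

lemma dcheck_iter {C k : ℝ} (hC : 0 < C) (hk : 1 < k)
    (h : ∀ r ∈ Ico (0:ℝ) 1, C * wHat w (1 - (1 - r) / k) ≤ wHat w r) (n : ℕ) :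
    ∀ r ∈ Ico (0:ℝ) 1, C ^ n * wHat w (1 - (1 - r) / k ^ n) ≤ wHat w r := by
  induction n with
  | zero =>
    intro r hr
    have e : (1:ℝ) - (1 - r) / k ^ 0 = r := by norm_num
    rw [e]; simp
  | succ n ih =>
    intro r hr
    have hkn : (1:ℝ) ≤ k ^ n := one_le_pow₀ hk.le
    have hknpos : (0:ℝ) < k ^ n := by positivity
    have hq : (1:ℝ) - (1 - r) / k ^ n ∈ Ico (0:ℝ) 1 := by
      constructor
      · have : (1 - r) / k ^ n ≤ 1 := (div_le_one hknpos).2 (by linarith [hr.1])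
        linarith
      · have : 0 < (1 - r) / k ^ n := div_pos (by linarith [hr.2]) hknpos
        linarith
    have h1 := ih r hr
    have h2 := h _ hq
    have e : (1:ℝ) - (1 - (1 - (1 - r) / k ^ n)) / k = 1 - (1 - r) / k ^ (n + 1) := by
      have hk0 : k ≠ 0 := by positivity
      field_simp
      ring
    rw [e] at h2
    calc C ^ (n + 1) * wHat w (1 - (1 - r) / k ^ (n + 1))
        = C ^ n * (C * wHat w (1 - (1 - r) / k ^ (n + 1))) := by ring
      _ ≤ C ^ n * wHat w (1 - (1 - r) / k ^ n) :=
          mul_le_mul_of_nonneg_left h2 (by positivity)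
      _ ≤ wHat w r := h1

end Aux

section Nu

variable {ω μ : ℝ → ℝ} {p : ℝ}

lemma nu_nonneg (hω : IsRadialWeight ω) (hμ : IsRadialWeight μ) (p : ℝ) :
    ∀ s ∈ Ico (0:ℝ) 1, 0 ≤ ω s * wHat μ s ^ p := fun s hs =>
  mul_nonneg (hω.1 s hs)
    (Real.rpow_nonneg (wHat_nonneg hμ.1 hμ.2.1 hs.1 hs.2.le) p)

lemma nu_integrable (hω : IsRadialWeight ω) (hμ : IsRadialWeight μ) (hp : 0 < p) :
    IntegrableOn (fun r => ω r * wHat μ r ^ p) (Ico (0:ℝ) 1) := by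
  obtain ⟨hω0, hωi, -⟩ := hω
  obtain ⟨hμ0, hμi, -⟩ := hμ
  have hanti : AntitoneOn (wHat μ) (Ico (0:ℝ) 1) := fun a ha b hb hab =>
    wHat_anti hμ0 hμi ha.1 hab hb.2.le
  have hmeas : AEMeasurable (wHat μ) (volume.restrict (Ico (0:ℝ) 1)) :=
    aemeasurable_restrict_of_antitoneOn measurableSet_Ico hanti
  have hmeas2 : AEStronglyMeasurable (fun r => wHat μ r ^ p)
      (volume.restrict (Ico (0:ℝ) 1)) :=
    (((Real.continuous_rpow_const hp.le).measurable).comp_aemeasurable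
      hmeas).aestronglyMeasurable
  have hb : ∀ᵐ r ∂(volume.restrict (Ico (0:ℝ) 1)), ‖wHat μ r ^ p‖ ≤ wHat μ 0 ^ p := by
    rw [ae_restrict_iff' measurableSet_Ico]
    refine ae_of_all _ fun r hr => ?_
    have h1 : 0 ≤ wHat μ r := wHat_nonneg hμ0 hμi hr.1 hr.2.le
    have h2 : wHat μ r ≤ wHat μ 0 := wHat_anti hμ0 hμi le_rfl hr.1 hr.2.le
    rw [Real.norm_eq_abs, abs_of_nonneg (Real.rpow_nonneg h1 p)]
    exact Real.rpow_le_rpow h1 h2 hp.le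
  have h := hωi.bdd_mul hmeas2 hb
  exact h.congr (ae_of_all _ fun x => mul_comm _ _)

lemma key_le (hω : IsRadialWeight ω) (hμ : IsRadialWeight μ) (hp : 0 < p)
    {a b : ℝ} (ha0 : 0 ≤ a) (hab : a ≤ b) (hb1 : b ≤ 1) :
    ∫ s in a..b, ω s * wHat μ s ^ p ≤ wHat μ a ^ p * ∫ s in a..b, ω s := by
  have hνi := nu_integrable hω hμ hp
  have h := integral_mono_Ioo hab
    (intervalIntegrable_of_mem hνi ha0 (hab.trans hb1) (ha0.trans hab) hb1)
    ((intervalIntegrable_of_mem hω.2.1 ha0 (hab.trans hb1) (ha0.trans hab) hb1).mul_const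
      (wHat μ a ^ p))
    (fun x hx => ?_)
  · calc ∫ s in a..b, ω s * wHat μ s ^ p ≤ ∫ s in a..b, ω s * wHat μ a ^ p := h
      _ = wHat μ a ^ p * ∫ s in a..b, ω s := by
          rw [intervalIntegral.integral_mul_const]; ring
  · have hx01 : x ∈ Ico (0:ℝ) 1 := ⟨ha0.trans hx.1.le, hx.2.trans_le hb1⟩
    have hμx : wHat μ x ≤ wHat μ a := wHat_anti hμ.1 hμ.2.1 ha0 hx.1.le hx01.2.le
    have hμx0 : 0 ≤ wHat μ x := wHat_nonneg hμ.1 hμ.2.1 hx01.1 hx01.2.le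
    exact mul_le_mul_of_nonneg_left (Real.rpow_le_rpow hμx0 hμx hp.le) (hω.1 x hx01)

lemma key_ge (hω : IsRadialWeight ω) (hμ : IsRadialWeight μ) (hp : 0 < p)
    {a b : ℝ} (ha0 : 0 ≤ a) (hab : a ≤ b) (hb1 : b ≤ 1) :
    wHat μ b ^ p * ∫ s in a..b, ω s ≤ ∫ s in a..b, ω s * wHat μ s ^ p := by
  have hνi := nu_integrable hω hμ hp
  have h := integral_mono_Ioo hab
    ((intervalIntegrable_of_mem hω.2.1 ha0 (hab.trans hb1) (ha0.trans hab) hb1).mul_const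
      (wHat μ b ^ p))
    (intervalIntegrable_of_mem hνi ha0 (hab.trans hb1) (ha0.trans hab) hb1)
    (fun x hx => ?_)
  · calc wHat μ b ^ p * ∫ s in a..b, ω s
        = ∫ s in a..b, ω s * wHat μ b ^ p := by
          rw [intervalIntegral.integral_mul_const]; ring
      _ ≤ ∫ s in a..b, ω s * wHat μ s ^ p := h
  · have hx01 : x ∈ Ico (0:ℝ) 1 := ⟨ha0.trans hx.1.le, hx.2.trans_le hb1⟩
    have hμx : wHat μ b ≤ wHat μ x := wHat_anti hμ.1 hμ.2.1 hx01.1 hx.2.le hb1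
    have hμb0 : 0 ≤ wHat μ b := wHat_nonneg hμ.1 hμ.2.1 (ha0.trans hab) hb1
    exact mul_le_mul_of_nonneg_left (Real.rpow_le_rpow hμb0 hμx hp.le) (hω.1 x hx01)

end Nu

set_option maxHeartbeats 1000000 in
/-- **Lemma (ii).** If `ω ∈ D`, `μ ∈ D̂` and `0 < p < ∞`, then the radial weight
`ν(r) = ω(r) μ̂(r)^p` belongs to `D`. -/
theorem Dclass_mul_wHat_rpow (ω μ : ℝ → ℝ) (hω : IsRadialWeight ω)
    (hμ : IsRadialWeight μ) (hωD : Dclass ω) (hμD : Dhat μ) (p : ℝ) (hp : 0 < p) :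
    Dclass (fun r => ω r * wHat μ r ^ p) := by
  obtain ⟨⟨Cw, hCw, hDw⟩, ⟨k, hk, C, hC, hDc⟩⟩ := hωD
  obtain ⟨Cm, hCm, hDm⟩ := hμD
  set ν : ℝ → ℝ := fun r => ω r * wHat μ r ^ p with hν
  have hν0 : ∀ s ∈ Ico (0:ℝ) 1, 0 ≤ ν s := nu_nonneg hω hμ p
  have hνi : IntegrableOn ν (Ico (0:ℝ) 1) := nu_integrable hω hμ hp
  -- upper bound : ν̂(a) ≤ μ̂(a)^p ω̂(a)
  have nuUB : ∀ a : ℝ, 0 ≤ a → a ≤ 1 → wHat ν a ≤ wHat μ a ^ p * wHat ω a := by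
    intro a ha0 ha1
    have := key_le hω hμ hp ha0 ha1 le_rfl
    simpa [wHat, hν] using this
  -- lower bound : μ̂(b)^p (ω̂(a) - ω̂(b)) ≤ ν̂(a)
  have nuLB : ∀ a b : ℝ, 0 ≤ a → a ≤ b → b ≤ 1 →
      wHat μ b ^ p * (wHat ω a - wHat ω b) ≤ wHat ν a := by
    intro a b ha0 hab hb1
    have hsplitν : wHat ν a = (∫ s in a..b, ν s) + wHat ν b := wHat_split hνi ha0 hab hb1
    have hsplitω : wHat ω a = (∫ s in a..b, ω s) + wHat ω b := wHat_split hω.2.1 ha0 hab hb1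
    have hνb : 0 ≤ wHat ν b := wHat_nonneg hν0 hνi (ha0.trans hab) hb1
    have hkg := key_ge hω hμ hp ha0 hab hb1
    have e : wHat ω a - wHat ω b = ∫ s in a..b, ω s := by linarith [hsplitω]
    rw [e, hsplitν]
    have : (∫ s in a..b, ν s) = ∫ s in a..b, ω s * wHat μ s ^ p := rfl
    rw [this]
    linarith [hkg]
  -- iterated D̂ for μ
  have hDmIter := dhat_iter (w := μ) (by linarith : (0:ℝ) < Cm) hDm
  -- iterated Ď for ω
  have hDcIter := dcheck_iter (w := ω) (by linarith : (0:ℝ) < C) hk (fun r hr => hDc r hr) 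
  constructor
  · -- D̂ for ν
    obtain ⟨n, hn⟩ : ∃ n : ℕ, 2 * k < 2 ^ n := pow_unbounded_of_one_lt (2 * k) one_lt_two
    set B : ℝ := (Cm ^ n) ^ p with hB
    have hBpos : 0 < B := Real.rpow_pos_of_pos (by positivity) p
    have hq : (0:ℝ) < Cw * B * C / (C - 1) :=
      div_pos (mul_pos (mul_pos (by linarith) hBpos) (by linarith)) (by linarith)
    refine ⟨Cw * B * C / (C - 1) + 1, by linarith, ?_⟩
    intro r hr
    set m : ℝ := (1 + r) / 2 with hm
    have hm0 : 0 ≤ m := by rw [hm]; linarith [hr.1]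
    have hm1 : m < 1 := by rw [hm]; linarith [hr.2]
    set t : ℝ := 1 - (1 - m) / k with ht
    have hkpos : (0:ℝ) < k := by linarith
    have hmt : m ≤ t := by
      rw [ht]
      have : (1 - m) / k ≤ 1 - m := div_le_self (by linarith) hk.le
      linarith
    have ht1 : t < 1 := by
      rw [ht]
      have : 0 < (1 - m) / k := div_pos (by linarith) hkpos
      linarith
    have ht0 : 0 ≤ t := hm0.trans hmt
    set q : ℝ := 1 - (1 - r) / 2 ^ n with hqdef
    have h2n : (0:ℝ) < 2 ^ n := by positivity
    have htq : t ≤ q := by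
      have h1 : (1 - r) / 2 ^ n ≤ (1 - r) / (2 * k) :=
        div_le_div_of_nonneg_left (by linarith [hr.2]) (by linarith) hn.le
      have e : (1 - m) / k = (1 - r) / (2 * k) := by
        rw [hm]; field_simp; ring
      rw [ht, hqdef, e]
      linarith
    have hq1 : q ≤ 1 := by
      rw [hqdef]
      have : 0 ≤ (1 - r) / 2 ^ n := div_nonneg (by linarith [hr.2]) h2n.le
      linarith
    have hm01 : m ∈ Ico (0:ℝ) 1 := ⟨hm0, hm1⟩
    have a1 : wHat ν r ≤ wHat μ r ^ p * wHat ω r := nuUB r hr.1 hr.2.le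
    have a2 : wHat μ r ≤ Cm ^ n * wHat μ q := by
      have h := hDmIter n r hr
      rwa [← hqdef] at h
    have a3 : wHat μ q ≤ wHat μ t := wHat_anti hμ.1 hμ.2.1 ht0 htq hq1
    have hCmn : (0:ℝ) ≤ Cm ^ n := pow_nonneg (by linarith) n
    have ha23 : wHat μ r ≤ Cm ^ n * wHat μ t :=
      a2.trans (mul_le_mul_of_nonneg_left a3 hCmn)
    have hμr0 : 0 ≤ wHat μ r := wHat_nonneg hμ.1 hμ.2.1 hr.1 hr.2.le
    have hμt0 : 0 ≤ wHat μ t := wHat_nonneg hμ.1 hμ.2.1 ht0 ht1.le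
    have a4 : wHat μ r ^ p ≤ B * wHat μ t ^ p := by
      have h := Real.rpow_le_rpow hμr0 ha23 hp.le
      rwa [Real.mul_rpow hCmn hμt0] at h
    have a5 : wHat ω r ≤ Cw * wHat ω m := by
      have h := hDw r hr
      rwa [← hm] at h
    have hωr0 : 0 ≤ wHat ω r := wHat_nonneg hω.1 hω.2.1 hr.1 hr.2.le
    have hωm0 : 0 ≤ wHat ω m := wHat_nonneg hω.1 hω.2.1 hm0 hm1.le
    have a6 : wHat μ t ^ p * (wHat ω m - wHat ω t) ≤ wHat ν m := nuLB m t hm0 hmt ht1.le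
    have a7 : C * wHat ω t ≤ wHat ω m := by
      have h := hDc m hm01
      rwa [← ht] at h
    have hνm0 : 0 ≤ wHat ν m := wHat_nonneg hν0 hνi hm0 hm1.le
    set X := wHat μ t ^ p with hXdef
    have hX0 : 0 ≤ X := Real.rpow_nonneg hμt0 p
    have h6C : C * (X * (wHat ω m - wHat ω t)) ≤ C * wHat ν m :=
      mul_le_mul_of_nonneg_left a6 (by linarith)
    have h7 : X * (C * wHat ω t) ≤ X * wHat ω m := mul_le_mul_of_nonneg_left a7 hX0
    have s2 : (C - 1) * (X * wHat ω m) ≤ C * wHat ν m := by linarith [h6C, h7]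
    have s3 : X * wHat ω m ≤ C * wHat ν m / (C - 1) := by
      rw [le_div_iff₀ (by linarith : (0:ℝ) < C - 1)]
      linarith [s2]
    have s1 : wHat ν r ≤ B * X * (Cw * wHat ω m) :=
      a1.trans (mul_le_mul a4 a5 hωr0 (mul_nonneg hBpos.le hX0))
    have s4 : wHat ν r ≤ Cw * B * (X * wHat ω m) := s1.trans_eq (by ring)
    have s5 : Cw * B * (X * wHat ω m) ≤ Cw * B * (C * wHat ν m / (C - 1)) :=
      mul_le_mul_of_nonneg_left s3 (mul_nonneg (by linarith) hBpos.le)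
    have e5 : Cw * B * (C * wHat ν m / (C - 1)) = Cw * B * C / (C - 1) * wHat ν m := by
      ring
    calc wHat ν r ≤ Cw * B * (X * wHat ω m) := s4
      _ ≤ Cw * B * C / (C - 1) * wHat ν m := by rw [← e5]; exact s5
      _ ≤ (Cw * B * C / (C - 1) + 1) * wHat ν m := by linarith [hνm0]
  · -- Ď for ν
    obtain ⟨M, hM⟩ : ∃ M : ℕ, C / (C - 1) < C ^ M := pow_unbounded_of_one_lt _ hC
    have hCpos : (0:ℝ) < C := by linarith
    have hM0 : M ≠ 0 := by
      rintro rfl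
      rw [pow_zero, div_lt_one (by linarith : (0:ℝ) < C - 1)] at hM
      linarith
    have hkM : 1 < k ^ M := one_lt_pow₀ hk hM0
    have hCM : (0:ℝ) < C ^ M := pow_pos hCpos M
    set C₂ : ℝ := C ^ M * (C - 1) / C with hC₂def
    have hC₂ : 1 < C₂ := by
      rw [hC₂def, lt_div_iff₀ hCpos]
      rw [div_lt_iff₀ (by linarith : (0:ℝ) < C - 1)] at hM
      linarith [hM]
    refine ⟨k ^ M, hkM, C₂, hC₂, ?_⟩
    intro r hr
    set t : ℝ := 1 - (1 - r) / k with ht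
    set s : ℝ := 1 - (1 - r) / k ^ M with hs
    have hkpos : (0:ℝ) < k := by linarith
    have hkMpos : (0:ℝ) < k ^ M := pow_pos hkpos M
    have hrt : r ≤ t := by
      rw [ht]
      have : (1 - r) / k ≤ 1 - r := div_le_self (by linarith [hr.2]) hk.le
      linarith
    have ht1 : t < 1 := by
      rw [ht]
      have : 0 < (1 - r) / k := div_pos (by linarith [hr.2]) hkpos
      linarith
    have ht0 : 0 ≤ t := hr.1.trans hrt
    have hts : t ≤ s := by
      have h1 : (1 - r) / k ^ M ≤ (1 - r) / k :=
        div_le_div_of_nonneg_left (by linarith [hr.2]) hkpos (le_self_pow₀ hk.le hM0)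
      rw [ht, hs]
      linarith
    have hs1 : s < 1 := by
      rw [hs]
      have : 0 < (1 - r) / k ^ M := div_pos (by linarith [hr.2]) hkMpos
      linarith
    have hs0 : 0 ≤ s := ht0.trans hts
    have b1 : wHat μ t ^ p * (wHat ω r - wHat ω t) ≤ wHat ν r := nuLB r t hr.1 hrt ht1.le
    have b2 : C * wHat ω t ≤ wHat ω r := by
      have h := hDc r hr
      rwa [← ht] at h
    have b3 : C ^ M * wHat ω s ≤ wHat ω r := by
      have h := hDcIter M r hr
      rwa [← hs] at h
    have hμs : wHat μ s ≤ wHat μ t := wHat_anti hμ.1 hμ.2.1 ht0 hts hs1.le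
    have hμs0 : 0 ≤ wHat μ s := wHat_nonneg hμ.1 hμ.2.1 hs0 hs1.le
    have hμt0 : 0 ≤ wHat μ t := wHat_nonneg hμ.1 hμ.2.1 ht0 ht1.le
    have hωs0 : 0 ≤ wHat ω s := wHat_nonneg hω.1 hω.2.1 hs0 hs1.le
    have b4 : wHat ν s ≤ wHat μ t ^ p * wHat ω s := by
      have h1 := nuUB s hs0 hs1.le
      have h2 : wHat μ s ^ p ≤ wHat μ t ^ p := Real.rpow_le_rpow hμs0 hμs hp.le
      exact h1.trans (mul_le_mul_of_nonneg_right h2 hωs0)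
    set Y := wHat μ t ^ p with hYdef
    have hY0 : 0 ≤ Y := Real.rpow_nonneg hμt0 p
    have c3 : Y * (C * wHat ω t) ≤ Y * wHat ω r := mul_le_mul_of_nonneg_left b2 hY0
    have hC0 : C ≠ 0 := ne_of_gt hCpos
    have e0 : C * (C₂ * wHat ν s) = (C - 1) * C ^ M * wHat ν s := by
      have h : C * (C₂ * wHat ν s) = C / C * ((C - 1) * C ^ M * wHat ν s) := by
        rw [hC₂def]; ring
      rw [h, div_self hC0, one_mul]
    have d1 : (C - 1) * C ^ M * wHat ν s ≤ (C - 1) * C ^ M * (Y * wHat ω s) :=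
      mul_le_mul_of_nonneg_left b4 (mul_nonneg (by linarith) hCM.le)
    have d2 : (C - 1) * Y * (C ^ M * wHat ω s) ≤ (C - 1) * Y * wHat ω r :=
      mul_le_mul_of_nonneg_left b3 (mul_nonneg (by linarith) hY0)
    have d3 : (C - 1) * Y * wHat ω r ≤ C * (Y * (wHat ω r - wHat ω t)) := by
      linarith [c3]
    have d4 : C * (Y * (wHat ω r - wHat ω t)) ≤ C * wHat ν r :=
      mul_le_mul_of_nonneg_left b1 hCpos.le
    have key2 : C * (C₂ * wHat ν s) ≤ C * wHat ν r := by
      rw [e0]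
      calc (C - 1) * C ^ M * wHat ν s ≤ (C - 1) * C ^ M * (Y * wHat ω s) := d1
        _ = (C - 1) * Y * (C ^ M * wHat ω s) := by ring
        _ ≤ (C - 1) * Y * wHat ω r := d2
        _ ≤ C * (Y * (wHat ω r - wHat ω t)) := d3
        _ ≤ C * wHat ν r := d4
    exact le_of_mul_le_mul_left key2 hCpos
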